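/- If (x̄, λ̄) satisfies D_x f(x̄) + E^T λ̄ = 0 and λ̄ ∈ ∂φ(E x̄), then (x̄, λ̄) is a saddle point of the augmented Lagrangian: L_c(x̄, λ) ≤ L_c(x̄, λ̄) ≤ L_c(x, λ̄) for all x ∈ X and λ ∈ H. -/

import Mathlib

/-- The Moreau envelope of `φ` with parameter `c`. -/
noncomputable def moreauEnv {H : Type*} [NormedAddCommGroup H] [InnerProductSpace ℝ H]
    (φ : H → ℝ) (c : ℝ) (z : H) : ℝ :=
  ⨅ u : H, (φ u + c / 2 * ‖u - z‖ ^ 2)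

/-- The augmented Lagrangian `L_c(x, λ) = f(x) + φ_c(Ex + λ/c) − (1/(2c))‖λ‖²`. -/
noncomputable def augLag {X H : Type*} [NormedAddCommGroup X] [NormedSpace ℝ X]
    [NormedAddCommGroup H] [InnerProductSpace ℝ H]
    (f : X → ℝ) (φ : H → ℝ) (E : X →L[ℝ] H) (c : ℝ) (x : X) (lam : H) : ℝ :=
  f x + moreauEnv φ c (E x + c⁻¹ • lam) - 1 / (2 * c) * ‖lam‖ ^ 2

section aux

variable {H : Type*} [NormedAddCommGroup H] [InnerProductSpace ℝ H]

/-- key pointwise lower bound on the Moreau integrand. -/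
lemma key_bound (φ : H → ℝ) (c : ℝ) (hc : 0 < c) (w lamb : H)
    (h2 : ∀ y : H, φ w + (inner ℝ lamb (y - w) : ℝ) ≤ φ y) (z u : H) :
    φ w + (inner ℝ lamb (z - w) : ℝ) - ‖lamb‖ ^ 2 / (2 * c)
      ≤ φ u + c / 2 * ‖u - z‖ ^ 2 := by
  have h := h2 u
  have hsplit : (inner ℝ lamb (u - w) : ℝ) = inner ℝ lamb (z - w) + (inner ℝ lamb (u - z) : ℝ) := by
    rw [← inner_add_right]; congr 1; abel
  have habs : |(inner ℝ lamb (u - z) : ℝ)| ≤ ‖lamb‖ * ‖u - z‖ := abs_real_inner_le_norm _ _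
  have h1 : -(‖lamb‖ * ‖u - z‖) ≤ (inner ℝ lamb (u - z) : ℝ) := neg_le_of_abs_le habs
  have hq : 0 ≤ c / 2 * (‖u - z‖ - ‖lamb‖ / c) ^ 2 := by positivity
  have hexp : c / 2 * (‖u - z‖ - ‖lamb‖ / c) ^ 2
      = c / 2 * ‖u - z‖ ^ 2 - ‖lamb‖ * ‖u - z‖ + ‖lamb‖ ^ 2 / (2 * c) := by
    field_simp
    ring
  rw [hexp] at hq
  linarith

lemma moreau_lower (φ : H → ℝ) (c : ℝ) (hc : 0 < c) (w lamb : H)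
    (h2 : ∀ y : H, φ w + (inner ℝ lamb (y - w) : ℝ) ≤ φ y) (z : H) :
    φ w + (inner ℝ lamb (z - w) : ℝ) - ‖lamb‖ ^ 2 / (2 * c) ≤ moreauEnv φ c z :=
  le_ciInf (key_bound φ c hc w lamb h2 z)

lemma moreau_upper (φ : H → ℝ) (c : ℝ) (hc : 0 < c) (w lamb : H)
    (h2 : ∀ y : H, φ w + (inner ℝ lamb (y - w) : ℝ) ≤ φ y) (z : H) :
    moreauEnv φ c z ≤ φ w + c / 2 * ‖w - z‖ ^ 2 := by
  refine ciInf_le ⟨φ w + (inner ℝ lamb (z - w) : ℝ) - ‖lamb‖ ^ 2 / (2 * c), ?_⟩ w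
  rintro r ⟨u, rfl⟩
  exact key_bound φ c hc w lamb h2 z u

end aux

/-- Gradient inequality for convex functions. -/
lemma grad_ineq {X : Type*} [NormedAddCommGroup X] [NormedSpace ℝ X]
    (f : X → ℝ) (hf : ConvexOn ℝ Set.univ f) (x₀ : X) (D : X →L[ℝ] ℝ)
    (hD : HasFDerivAt f D x₀) (x : X) :
    f x₀ + D (x - x₀) ≤ f x := by
  set g : ℝ → ℝ := fun t => f (x₀ + t • (x - x₀)) with hg
  have hgd : HasDerivAt g (D (x - x₀)) 0 := by
    have hline : HasDerivAt (fun t : ℝ => x₀ + t • (x - x₀)) (x - x₀) 0 := by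
      simpa using ((hasDerivAt_id (0 : ℝ)).smul_const (x - x₀)).const_add x₀
    have hD' : HasFDerivAt f D (x₀ + (0:ℝ) • (x - x₀)) := by simpa using hD
    have := hD'.comp_hasDerivAt 0 hline
    exact this
  -- slope bound from convexity
  have hslope : ∀ t : ℝ, t ∈ Set.Ioo (0:ℝ) 1 → (g t - g 0) / t ≤ f x - f x₀ := by
    rintro t ⟨ht0, ht1⟩
    have hcvx := hf.2 (Set.mem_univ x₀) (Set.mem_univ x)
      (show (0:ℝ) ≤ 1 - t by linarith) (le_of_lt ht0) (by ring)
    have hgt : g t ≤ (1 - t) * f x₀ + t * f x := by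
      have : (1 - t) • x₀ + t • x = x₀ + t • (x - x₀) := by
        simp [smul_sub, sub_smul]; abel
      rw [this] at hcvx
      simpa [hg] using hcvx
    have hg0 : g 0 = f x₀ := by simp [hg]
    rw [div_le_iff₀ ht0, hg0]
    nlinarith
  have htend : Filter.Tendsto (fun t : ℝ => (g t - g 0) / t) (nhdsWithin 0 (Set.Ioo 0 1))
      (nhds (D (x - x₀))) := by
    have := hgd.hasDerivWithinAt (s := Set.Ioo 0 1)
    have h2 := hasDerivWithinAt_iff_tendsto_slope.mp this
    have : Filter.Tendsto (slope g 0) (nhdsWithin 0 (Set.Ioo 0 1)) (nhds (D (x - x₀))) := by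
      refine h2.mono_left (nhdsWithin_mono _ ?_)
      intro t ht; exact ⟨ht, by simpa using ne_of_gt ht.1⟩
    refine this.congr' ?_
    filter_upwards [self_mem_nhdsWithin] with t ht
    simp [slope_def_field, div_eq_inv_mul]
  have hmem : nhdsWithin (0:ℝ) (Set.Ioo 0 1) ≠ ⊥ := by
    have : (0:ℝ) ∈ closure (Set.Ioo (0:ℝ) 1) := by
      rw [closure_Ioo one_ne_zero.symm]; exact ⟨le_refl _, by norm_num⟩
    exact mem_closure_iff_nhdsWithin_neBot.mp this |>.ne
  have : D (x - x₀) ≤ f x - f x₀ := by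
    have hne : (nhdsWithin (0:ℝ) (Set.Ioo 0 1)).NeBot := ⟨hmem⟩
    refine le_of_tendsto htend ?_
    filter_upwards [self_mem_nhdsWithin] with t ht using hslope t ht
  linarith

theorem optimality_implies_saddle (X H : Type*)
    [NormedAddCommGroup X] [NormedSpace ℝ X] [CompleteSpace X]
    [NormedAddCommGroup H] [InnerProductSpace ℝ H] [CompleteSpace H]
    (f : X → ℝ) (hf : ConvexOn ℝ Set.univ f)
    (Df : X → X →L[ℝ] ℝ) (hDf : ∀ x, HasFDerivAt f (Df x) x) (hDfc : Continuous Df)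
    (φ : H → ℝ) (hconv : ConvexOn ℝ Set.univ φ) (hlsc : LowerSemicontinuous φ)
    (E : X →L[ℝ] H) (c : ℝ) (hc : 0 < c)
    (xb : X) (lamb : H)
    (h1 : Df xb + (innerSL ℝ lamb).comp E = 0)
    (h2 : ∀ y : H, φ (E xb) + (inner ℝ lamb (y - E xb) : ℝ) ≤ φ y) :
    ∀ (x : X) (lam : H),
      augLag f φ E c xb lam ≤ augLag f φ E c xb lamb ∧
      augLag f φ E c xb lamb ≤ augLag f φ E c x lamb := by
  intro x lam
  have hc' : (c:ℝ) ≠ 0 := ne_of_gt hc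
  -- upper bound: augLag f φ E c xb μ ≤ f xb + φ (E xb) for any μ
  have hub : ∀ μ : H, augLag f φ E c xb μ ≤ f xb + φ (E xb) := by
    intro μ
    have := moreau_upper φ c hc (E xb) lamb h2 (E xb + c⁻¹ • μ)
    have hnorm : ‖E xb - (E xb + c⁻¹ • μ)‖ ^ 2 = c⁻¹ ^ 2 * ‖μ‖ ^ 2 := by
      rw [show E xb - (E xb + c⁻¹ • μ) = -(c⁻¹ • μ) by abel, norm_neg, norm_smul,
        Real.norm_eq_abs, abs_inv, abs_of_pos hc]
      ring
    unfold augLag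
    rw [hnorm] at this
    have : moreauEnv φ c (E xb + c⁻¹ • μ) ≤ φ (E xb) + 1/(2*c) * ‖μ‖^2 := by
      calc moreauEnv φ c (E xb + c⁻¹ • μ) ≤ φ (E xb) + c/2 * (c⁻¹^2 * ‖μ‖^2) := this
        _ = φ (E xb) + 1/(2*c) * ‖μ‖^2 := by field_simp
    linarith
  -- lower bound on augLag f φ E c y lamb
  have hlb : ∀ y : X,
      f y + φ (E xb) + (inner ℝ lamb (E y - E xb) : ℝ) ≤ augLag f φ E c y lamb := by
    intro y
    have := moreau_lower φ c hc (E xb) lamb h2 (E y + c⁻¹ • lamb)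
    have hin : (inner ℝ lamb (E y + c⁻¹ • lamb - E xb) : ℝ)
        = inner ℝ lamb (E y - E xb) + c⁻¹ * ‖lamb‖^2 := by
      rw [show E y + c⁻¹ • lamb - E xb = (E y - E xb) + c⁻¹ • lamb by abel,
        inner_add_right, real_inner_smul_right, real_inner_self_eq_norm_sq]
    rw [hin] at this
    unfold augLag
    have h2c : c⁻¹ * ‖lamb‖^2 - ‖lamb‖^2/(2*c) = 1/(2*c) * ‖lamb‖^2 := by
      field_simp
      ring
    linarith
  constructor
  · calc augLag f φ E c xb lam ≤ f xb + φ (E xb) := hub lam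
      _ = f xb + φ (E xb) + (inner ℝ lamb (E xb - E xb) : ℝ) := by simp
      _ ≤ augLag f φ E c xb lamb := hlb xb
  · have hgrad := grad_ineq f hf xb (Df xb) (hDf xb) x
    have hDval : Df xb (x - xb) = -(inner ℝ lamb (E (x - xb)) : ℝ) := by
      have := congrFun (congrArg DFunLike.coe h1) (x - xb)
      simp at this
      rw [inner_sub_right] at this
      rw [map_sub, map_sub, inner_sub_right]
      linarith [this]
    calc augLag f φ E c xb lamb ≤ f xb + φ (E xb) := hub lamb
      _ ≤ f x + φ (E xb) + (inner ℝ lamb (E x - E xb) : ℝ) := by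
          have : (inner ℝ lamb (E (x - xb)) : ℝ) = inner ℝ lamb (E x - E xb) := by
            rw [map_sub]
          rw [hDval, this] at hgrad
          linarith
      _ ≤ augLag f φ E c x lamb := hlb x
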